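/- Let P be a convex polygon embedded at height one in ℝ³ with vertices v₁,…,vₙ (each of the form (*,*,1)) in counterclockwise order, and suppose n ≥ 3. For distinct φ, φ′ in the simplex Γₙ = {φ ∈ ℝ≥0ⁿ : Σφⁱ = r}, the zonotopes Z(φ) = Σᵢ φⁱ·conv(0,vᵢ) and Z(φ′) = Σᵢ φ′ⁱ·conv(0,vᵢ), assumed of nonzero volume, are not homothetic (i.e., there is no κ > 0 and t ∈ ℝ³ with Z(φ) = κ·Z(φ′) + t). -/

import Mathlib

open Pointwise MeasureTheory

/-- The determinant of the 3×3 matrix with columns `a`, `b`, `c`. -/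
noncomputable def det3 (a b c : Fin 3 → ℝ) : ℝ :=
  Matrix.det (Matrix.of fun i j => ![a, b, c] j i)

noncomputable def dot (u x : Fin 3 → ℝ) : ℝ := ∑ k, u k * x k

noncomputable def dotL (u : Fin 3 → ℝ) : (Fin 3 → ℝ) →ₗ[ℝ] ℝ where
  toFun := dot u
  map_add' x y := by simp [dot, mul_add, Finset.sum_add_distrib]
  map_smul' c x := by simp [dot, Finset.mul_sum]; ring_nf; simp [mul_comm, mul_left_comm]

@[simp] lemma dotL_apply (u x : Fin 3 → ℝ) : dotL u x = dot u x := rfl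

lemma dot_comb (x y w : Fin 3 → ℝ) (c : ℝ) :
    dot (x + c • y) w = dot x w + c * dot y w := by
  simp [dot, add_mul, Finset.sum_add_distrib, Finset.mul_sum, mul_assoc]

lemma dot_neg (u x : Fin 3 → ℝ) : dot (-u) x = - dot u x := by
  simp [dot]

lemma smul_segment_zero (c : ℝ) (w : Fin 3 → ℝ) :
    c • segment ℝ (0 : Fin 3 → ℝ) w = segment ℝ 0 (c • w) := by
  rw [segment_eq_image, segment_eq_image, ← Set.image_smul, ← Set.image_comp]
  apply Set.image_congr
  intro θ _
  simp [smul_comm c θ]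

lemma image_piece (u w : Fin 3 → ℝ) (c : ℝ) (hc : 0 ≤ c) :
    ⇑(dotL u) '' (c • segment ℝ (0 : Fin 3 → ℝ) w)
      = Set.Icc (c * min 0 (dot u w)) (c * max 0 (dot u w)) := by
  rw [smul_segment_zero]
  have h1 : ⇑(dotL u) '' segment ℝ (0 : Fin 3 → ℝ) (c • w)
      = segment ℝ (dotL u 0) (dotL u (c • w)) := by
    have := image_segment ℝ (dotL u).toAffineMap (0 : Fin 3 → ℝ) (c • w)
    simpa using this
  rw [h1]
  have h2 : dotL u (0 : Fin 3 → ℝ) = 0 := by simp [dot]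
  have h3 : dotL u (c • w) = c * dot u w := by
    simp [dot, Finset.mul_sum, mul_assoc, mul_left_comm]
  rw [h2, h3, segment_eq_uIcc]
  rcases le_total 0 (dot u w) with h | h
  · rw [Set.uIcc_of_le (by positivity), min_eq_left h, max_eq_right h, mul_zero]
  · rw [Set.uIcc_of_ge (mul_nonpos_of_nonneg_of_nonpos hc h), min_eq_right h,
      max_eq_left h, mul_zero]

lemma sup_sum {m : ℕ} (A : Fin m → Set ℝ) (hne : ∀ i, (A i).Nonempty)
    (hbd : ∀ i, BddAbove (A i)) (s : Finset (Fin m)) :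
    (∑ i ∈ s, A i).Nonempty ∧ BddAbove (∑ i ∈ s, A i) ∧
      sSup (∑ i ∈ s, A i) = ∑ i ∈ s, sSup (A i) := by
  classical
  induction s using Finset.induction_on with
  | empty =>
      refine ⟨⟨0, rfl⟩, ?_, ?_⟩
      · rw [Finset.sum_empty, ← Set.singleton_zero]
        exact bddAbove_singleton
      · rw [Finset.sum_empty, Finset.sum_empty, csSup_zero]
  | insert a s ha ih =>
      rw [Finset.sum_insert ha, Finset.sum_insert ha]
      exact ⟨(hne a).add ih.1, (hbd a).add ih.2.1,
        by rw [csSup_add (hne a) (hbd a) ih.1 ih.2.1, ih.2.2]⟩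

lemma image_sum {m : ℕ} (f : (Fin 3 → ℝ) →ₗ[ℝ] ℝ) (A : Fin m → Set (Fin 3 → ℝ))
    (s : Finset (Fin m)) : f '' (∑ i ∈ s, A i) = ∑ i ∈ s, f '' A i := by
  classical
  induction s using Finset.induction_on with
  | empty => simp [← Set.singleton_zero]
  | insert a s ha ih =>
      rw [Finset.sum_insert ha, Finset.sum_insert ha, Set.image_add f, ih]

lemma sup_zono {m : ℕ} (v : Fin m → Fin 3 → ℝ) (c : Fin m → ℝ) (hc : ∀ i, 0 ≤ c i)
    (u : Fin 3 → ℝ) :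
    (⇑(dotL u) '' (∑ i, c i • segment ℝ (0 : Fin 3 → ℝ) (v i))).Nonempty ∧
    BddAbove (⇑(dotL u) '' (∑ i, c i • segment ℝ (0 : Fin 3 → ℝ) (v i))) ∧
    sSup (⇑(dotL u) '' (∑ i, c i • segment ℝ (0 : Fin 3 → ℝ) (v i)))
      = ∑ i, c i * max 0 (dot u (v i)) := by
  rw [image_sum]
  have hpc : ∀ i : Fin m, ⇑(dotL u) '' (c i • segment ℝ (0 : Fin 3 → ℝ) (v i))
      = Set.Icc (c i * min 0 (dot u (v i))) (c i * max 0 (dot u (v i))) :=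
    fun i => image_piece u (v i) (c i) (hc i)
  have hle : ∀ i : Fin m, c i * min 0 (dot u (v i)) ≤ c i * max 0 (dot u (v i)) :=
    fun i => mul_le_mul_of_nonneg_left (min_le_max.trans_eq rfl) (hc i)
  have hrw : (∑ i, ⇑(dotL u) '' (c i • segment ℝ (0 : Fin 3 → ℝ) (v i)))
      = ∑ i, Set.Icc (c i * min 0 (dot u (v i))) (c i * max 0 (dot u (v i))) :=
    Finset.sum_congr rfl (fun i _ => hpc i)
  rw [hrw]
  obtain ⟨h1, h2, h3⟩ := sup_sum _ (fun i => Set.nonempty_Icc.2 (hle i))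
    (fun i => bddAbove_Icc) Finset.univ
  refine ⟨h1, h2, ?_⟩
  rw [h3]
  exact Finset.sum_congr rfl (fun i _ => csSup_Icc (hle i))

lemma max0_add_max0_neg (a : ℝ) : max 0 a + max 0 (-a) = |a| := by
  rcases le_total 0 a with h | h
  · rw [max_eq_right h, max_eq_left (by linarith), abs_of_nonneg h, add_zero]
  · rw [max_eq_left h, max_eq_right (by linarith), abs_of_nonpos h, zero_add]

lemma abs_add_abs_sub (c x : ℝ) (h : |x| ≤ |c|) : |c + x| + |c - x| = 2 * |c| := by
  obtain ⟨h1, h2⟩ := abs_le.mp h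
  rcases le_total 0 c with hc | hc
  · rw [abs_of_nonneg hc] at h1 h2
    rw [abs_of_nonneg (by linarith), abs_of_nonneg (by linarith), abs_of_nonneg hc]; ring
  · rw [abs_of_nonpos hc] at h1 h2
    rw [abs_of_nonpos (by linarith), abs_of_nonpos (by linarith), abs_of_nonpos hc]; ring

lemma det3_col12 (a c : Fin 3 → ℝ) : det3 a a c = 0 := by
  simp [det3, Matrix.det_fin_three, Matrix.vecHead, Matrix.vecTail]; try ring

lemma det3_col13 (a b : Fin 3 → ℝ) : det3 a b a = 0 := by
  simp [det3, Matrix.det_fin_three, Matrix.vecHead, Matrix.vecTail]; try ring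

lemma det3_col23 (a b : Fin 3 → ℝ) : det3 a b b = 0 := by
  simp [det3, Matrix.det_fin_three, Matrix.vecHead, Matrix.vecTail]; try ring


/-- For a convex polygon at height one with vertices `v₁,…,vₙ`
(counterclockwise), and distinct points `φ ≠ φ'` of the simplex
`Γₙ = {φ ∈ ℝ≥0ⁿ : Σφⁱ = r}`, the zonotopes `Z(φ)` and `Z(φ')`, assumed of
nonzero volume, are not homothetic. -/
theorem zonotopes_not_homothetic (n : ℕ) (hn : 3 ≤ n)
    (v : Fin n → (Fin 3 → ℝ)) (hheight : ∀ i, v i 2 = 1)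
    (hccw : ∀ i j k : Fin n, i < j → j < k → 0 < det3 (v i) (v j) (v k))
    (r : ℝ) (hr : 0 < r) (φ φ' : Fin n → ℝ)
    (hφ : ∀ i, 0 ≤ φ i) (hφ' : ∀ i, 0 ≤ φ' i)
    (hsum : ∑ i, φ i = r) (hsum' : ∑ i, φ' i = r) (hne : φ ≠ φ')
    (hvol : volume (∑ i, φ i • segment ℝ (0 : Fin 3 → ℝ) (v i)) ≠ 0)
    (hvol' : volume (∑ i, φ' i • segment ℝ (0 : Fin 3 → ℝ) (v i)) ≠ 0) :
    ¬ ∃ (κ : ℝ) (t : Fin 3 → ℝ), 0 < κ ∧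
        (∑ i, φ i • segment ℝ (0 : Fin 3 → ℝ) (v i))
          = κ • (∑ i, φ' i • segment ℝ (0 : Fin 3 → ℝ) (v i)) + {t} := by

  rintro ⟨κ, t, hκ, hset⟩
  have hE : ∀ u : Fin 3 → ℝ,
      ∑ i, φ i * max 0 (dot u (v i))
        = κ * ∑ i, φ' i * max 0 (dot u (v i)) + dot u t := by
    intro u
    have himg := congrArg (fun S => sSup (⇑(dotL u) '' S)) hset
    obtain ⟨hne1, hbd1, hs1⟩ := sup_zono v φ hφ u
    obtain ⟨hne2, hbd2, hs2⟩ := sup_zono v φ' hφ' u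
    rw [hs1, Set.image_add (dotL u), Set.image_singleton] at himg
    have himgsmul : ⇑(dotL u) '' (κ • ∑ i, φ' i • segment ℝ (0 : Fin 3 → ℝ) (v i))
        = κ • (⇑(dotL u) '' ∑ i, φ' i • segment ℝ (0 : Fin 3 → ℝ) (v i)) := by
      rw [image_smul_set]
    rw [himgsmul,
      csSup_add (hne2.smul_set) ((bddAbove_smul_iff_of_pos hκ).2 hbd2)
        (Set.singleton_nonempty _) bddAbove_singleton,
      csSup_singleton, Real.sSup_smul_of_nonneg hκ.le, hs2, smul_eq_mul] at himg
    exact himg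
  -- Step 1: κ = 1 and t 2 = 0
  have hdz : ∀ x : Fin 3 → ℝ, dot ![0,0,1] x = x 2 := by
    intro x; simp [dot, Fin.sum_univ_three]
  have h2 : t 2 = 0 := by
    have h := hE (-![0,0,1])
    simp only [dot_neg, hdz, hheight] at h
    norm_num at h
    linarith
  have hκ1 : κ = 1 := by
    have h := hE ![0,0,1]
    simp only [hdz, hheight] at h
    norm_num at h
    rw [hsum, hsum', h2, add_zero] at h
    have : κ * r = 1 * r := by linarith
    exact mul_right_cancel₀ hr.ne' this
  rw [hκ1] at hE
  simp only [one_mul] at hE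
  -- Step 2: the even part vanishes
  have habs : ∀ u : Fin 3 → ℝ, ∑ i, (φ i - φ' i) * |dot u (v i)| = 0 := by
    intro u
    have hu := hE u
    have hnu := hE (-u)
    simp only [dot_neg] at hnu
    have key : ∀ c : Fin n → ℝ,
        ∑ i, c i * max 0 (dot u (v i)) + ∑ i, c i * max 0 (-dot u (v i))
          = ∑ i, c i * |dot u (v i)| := by
      intro c
      rw [← Finset.sum_add_distrib]
      exact Finset.sum_congr rfl fun i _ => by rw [← mul_add, max0_add_max0_neg]
    have k1 := key φ
    have k2 := key φ'
    simp only [sub_mul, Finset.sum_sub_distrib]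
    linarith
  -- Step 3: pick the index where φ and φ' differ
  obtain ⟨j, hj⟩ := Function.ne_iff.mp hne
  have vne : ∀ i, i ≠ j → v i ≠ v j := by
    intro i hij hvij
    have h2n : ∃ k : Fin n, k ≠ i ∧ k ≠ j := by
      by_contra h
      push_neg at h
      have hsub : (Finset.univ : Finset (Fin n)) ⊆ {i, j} := by
        intro k _
        rcases eq_or_ne k i with rfl | hk
        · exact Finset.mem_insert_self _ _
        · simp [h k hk]
      have hcard := Finset.card_le_card hsub
      have : ({i, j} : Finset (Fin n)).card ≤ 2 :=
        (Finset.card_insert_le _ _).trans (by simp)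
      simp [Finset.card_univ] at hcard
      omega
    obtain ⟨k, hki, hkj⟩ := h2n
    rcases lt_trichotomy i j with h₁ | h₁ | h₁
    · rcases lt_trichotomy k i with h₂ | h₂ | h₂
      · have := hccw k i j h₂ h₁; rw [hvij] at this; simp [det3_col23] at this
      · exact hki h₂
      · rcases lt_trichotomy k j with h₃ | h₃ | h₃
        · have := hccw i k j h₂ h₃; rw [hvij] at this; simp [det3_col13] at this
        · exact hkj h₃
        · have := hccw i j k h₁ h₃; rw [hvij] at this; simp [det3_col12] at this
    · exact hij h₁
    · rcases lt_trichotomy k j with h₂ | h₂ | h₂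
      · have := hccw k j i h₂ h₁; rw [hvij] at this; simp [det3_col23] at this
      · exact hkj h₂
      · rcases lt_trichotomy k i with h₃ | h₃ | h₃
        · have := hccw j k i h₂ h₃; rw [hvij] at this; simp [det3_col13] at this
        · exact hki h₃
        · have := hccw j i k h₁ h₃; rw [hvij] at this; simp [det3_col12] at this
  -- Step 4: a direction orthogonal to v j but to no other v i
  have hc : ∀ i : Fin n, dot ![1, 0, -(v j 0)] (v i) = v i 0 - v j 0 := by
    intro i
    simp [dot, Fin.sum_univ_three, hheight i]; ring
  have hd : ∀ i : Fin n, dot ![0, 1, -(v j 1)] (v i) = v i 1 - v j 1 := by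
    intro i
    simp [dot, Fin.sum_univ_three, hheight i]; ring
  have hcd : ∀ i, i ≠ j → ¬(v i 0 - v j 0 = 0 ∧ v i 1 - v j 1 = 0) := by
    rintro i hij ⟨h0, h1⟩
    apply vne i hij
    funext k
    fin_cases k
    · show v i 0 = v j 0; linarith
    · show v i 1 = v j 1; linarith
    · show v i 2 = v j 2; rw [hheight, hheight]
  obtain ⟨s, hs⟩ := Infinite.exists_notMem_finset
    (Finset.univ.image fun i : Fin n => -(v i 0 - v j 0) / (v i 1 - v j 1))
  have hA : ∀ i : Fin n, dot (![1, 0, -(v j 0)] + s • ![0, 1, -(v j 1)]) (v i)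
      = (v i 0 - v j 0) + s * (v i 1 - v j 1) := by
    intro i; rw [dot_comb, hc, hd]
  have hAj : dot (![1, 0, -(v j 0)] + s • ![0, 1, -(v j 1)]) (v j) = 0 := by
    rw [hA]; ring
  have hAi : ∀ i, i ≠ j →
      dot (![1, 0, -(v j 0)] + s • ![0, 1, -(v j 1)]) (v i) ≠ 0 := by
    intro i hij h0
    rw [hA] at h0
    by_cases hd1 : v i 1 - v j 1 = 0
    · exact hcd i hij ⟨by rw [hd1] at h0; linarith, hd1⟩
    · apply hs
      refine Finset.mem_image.2 ⟨i, Finset.mem_univ i, ?_⟩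
      field_simp
      linarith
  set U : Fin 3 → ℝ := ![1, 0, -(v j 0)] + s • ![0, 1, -(v j 1)] with hUdef
  have hBj : 0 < dot (v j) (v j) := by
    have h2' := hheight j
    simp only [dot, Fin.sum_univ_three, h2']
    nlinarith [sq_nonneg (v j 0), sq_nonneg (v j 1)]
  have hern : (Finset.univ.erase j).Nonempty := by
    rw [← Finset.card_pos, Finset.card_erase_of_mem (Finset.mem_univ j),
      Finset.card_univ, Fintype.card_fin]
    omega
  set ε := (Finset.univ.erase j).inf'
      hern (fun i => |dot U (v i)| / (|dot (v j) (v i)| + 1)) with hεdef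
  have hεpos : 0 < ε := by
    rw [hεdef, Finset.lt_inf'_iff]
    intro i hi
    have hne0 : dot U (v i) ≠ 0 := hAi i (Finset.ne_of_mem_erase hi)
    positivity
  have hεle : ∀ i ∈ Finset.univ.erase j,
      ε * |dot (v j) (v i)| ≤ |dot U (v i)| := by
    intro i hi
    have h1 := Finset.inf'_le (fun i => |dot U (v i)| / (|dot (v j) (v i)| + 1)) hi
    rw [← hεdef] at h1
    have h2 : (0:ℝ) < |dot (v j) (v i)| + 1 := by positivity
    rw [le_div_iff₀ h2] at h1
    nlinarith [hεpos.le]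
  -- Step 5: conclude φ j = φ' j, contradiction
  have hpl := habs (U + ε • v j)
  have hmi := habs (U + (-ε) • v j)
  have hze := habs U
  simp only [dot_comb] at hpl hmi
  have hcomb : ∑ i, (φ i - φ' i) *
      (|dot U (v i) + ε * dot (v j) (v i)| + |dot U (v i) + (-ε) * dot (v j) (v i)|
        - 2 * |dot U (v i)|) = 0 := by
    have expand : ∑ i, (φ i - φ' i) *
        (|dot U (v i) + ε * dot (v j) (v i)| + |dot U (v i) + (-ε) * dot (v j) (v i)|
          - 2 * |dot U (v i)|)
        = (∑ i, (φ i - φ' i) * |dot U (v i) + ε * dot (v j) (v i)|)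
          + (∑ i, (φ i - φ' i) * |dot U (v i) + (-ε) * dot (v j) (v i)|)
          - 2 * ∑ i, (φ i - φ' i) * |dot U (v i)| := by
      rw [Finset.mul_sum, ← Finset.sum_add_distrib, ← Finset.sum_sub_distrib]
      exact Finset.sum_congr rfl fun i _ => by ring
    rw [expand, hpl, hmi, hze]
    ring
  rw [Finset.sum_eq_single j] at hcomb
  · rw [hAj] at hcomb
    have hBj' : (0:ℝ) < |dot (v j) (v j)| := abs_pos.2 hBj.ne'
    have hterm : |(0:ℝ) + ε * dot (v j) (v j)| + |(0:ℝ) + (-ε) * dot (v j) (v j)|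
        - 2 * |(0:ℝ)| = 2 * (ε * |dot (v j) (v j)|) := by
      rw [zero_add, zero_add, abs_zero, abs_mul, abs_mul, abs_of_pos hεpos,
        abs_neg, abs_of_pos hεpos]
      ring
    rw [hterm] at hcomb
    rcases mul_eq_zero.1 hcomb with h | h
    · exact hj (by linarith)
    · nlinarith
  · intro i _ hij
    have h1 := hεle i (Finset.mem_erase.2 ⟨hij, Finset.mem_univ i⟩)
    have h2 : |ε * dot (v j) (v i)| ≤ |dot U (v i)| := by
      rw [abs_mul, abs_of_pos hεpos]; exact h1
    have h3 := abs_add_abs_sub (dot U (v i)) (ε * dot (v j) (v i)) h2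
    have h4 : dot U (v i) + (-ε) * dot (v j) (v i)
        = dot U (v i) - ε * dot (v j) (v i) := by ring
    rw [h4]
    have h5 : |dot U (v i) + ε * dot (v j) (v i)|
        + |dot U (v i) - ε * dot (v j) (v i)| - 2 * |dot U (v i)| = 0 := by
      linarith
    rw [h5, mul_zero]
  · intro h
    exact absurd (Finset.mem_univ j) h
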